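/- Per-step Fisher information of the option-transition distribution. For all indices i, j: ∑_{o'} k_ϑ(o') · ∂_i ln k_ϑ(o') · ∂_j ln k_ϑ(o') = −∂_i ln β(ϑ) · ∂_j ln(1 − β(ϑ) + β(ϑ)·π_O(o)); that is, the Fisher information matrix of the one-step option-transition distribution equals minus the outer product of the score of the termination probability β and the score of the continuation probability 1 − β + β·π_O(o). -/

import Mathlib

/-- Partial derivative of `f : ℝⁿ → ℝ` with respect to the `i`-th coordinate of `ϑ`. -/
noncomputable def pd {n : ℕ} (i : Fin n) (f : (Fin n → ℝ) → ℝ) (ϑ : Fin n → ℝ) : ℝ :=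
  fderiv ℝ f ϑ (Pi.single i 1)

lemma pd_log_aux {n : ℕ} {g : (Fin n → ℝ) → ℝ} {g' : (Fin n → ℝ) →L[ℝ] ℝ} {ϑ : Fin n → ℝ}
    (hg : HasFDerivAt g g' ϑ) (h0 : g ϑ ≠ 0) (i : Fin n) :
    pd i (fun x => Real.log (g x)) ϑ = (g ϑ)⁻¹ * g' (Pi.single i 1) := by
  unfold pd
  rw [(hg.log h0).fderiv]
  simp

/-- Per-step Fisher information of the one-step option-transition distribution
`k_ϑ(o') = (1 − β(ϑ))·𝟙[o' = o] + β(ϑ)·π_O(o')`: it equals minus the outer product of the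
score of the termination probability `β` and the score of the continuation probability
`1 − β + β·π_O(o)`. -/
theorem option_transition_per_step_fisher
    {O : Type*} [Fintype O] [Nonempty O] [DecidableEq O] (o : O) {n : ℕ}
    (πO : O → ℝ) (hπO : ∀ o', 0 < πO o') (hπOsum : ∑ o', πO o' = 1)
    (β : (Fin n → ℝ) → ℝ) (ϑ : Fin n → ℝ)
    (hβdiff : DifferentiableAt ℝ β ϑ) (hβ0 : 0 < β ϑ) (hβ1 : β ϑ < 1)
    (k : (Fin n → ℝ) → O → ℝ)
    (hk : ∀ ϑ' o', k ϑ' o' = (1 - β ϑ') * (if o' = o then 1 else 0) + β ϑ' * πO o')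
    (i j : Fin n) :
    ∑ o', k ϑ o' * pd i (fun ϑ' => Real.log (k ϑ' o')) ϑ * pd j (fun ϑ' => Real.log (k ϑ' o')) ϑ
      = -(pd i (fun ϑ' => Real.log (β ϑ')) ϑ
          * pd j (fun ϑ' => Real.log (1 - β ϑ' + β ϑ' * πO o)) ϑ) := by
  set f' := fderiv ℝ β ϑ with hf'
  have hf : HasFDerivAt β f' ϑ := hβdiff.hasFDerivAt
  have hβne : β ϑ ≠ 0 := ne_of_gt hβ0
  have hKpos : 0 < 1 - β ϑ + β ϑ * πO o := by nlinarith [hπO o]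
  have hKne : 1 - β ϑ + β ϑ * πO o ≠ 0 := ne_of_gt hKpos
  have hkval : ∀ o', k ϑ o' = (1 - β ϑ) * (if o' = o then 1 else 0) + β ϑ * πO o' := hk ϑ
  have hkpos : ∀ o', 0 < k ϑ o' := by
    intro o'
    rw [hkval o']
    by_cases h : o' = o <;> simp [h] <;> nlinarith [hπO o', hπO o]
  have hpd : ∀ (m : Fin n) o', pd m (fun ϑ' => Real.log (k ϑ' o')) ϑ
      = (k ϑ o')⁻¹ * ((πO o' - if o' = o then 1 else 0) * f' (Pi.single m 1)) := by
    intro m o'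
    set c : ℝ := if o' = o then 1 else 0 with hc
    have heq : (fun ϑ' => Real.log (k ϑ' o'))
        = fun ϑ' => Real.log ((1 - β ϑ') * c + β ϑ' * πO o') := by
      ext x; rw [hk]
    have hg : HasFDerivAt (fun ϑ' => (1 - β ϑ') * c + β ϑ' * πO o')
        (c • ((0 : (Fin n → ℝ) →L[ℝ] ℝ) - f') + πO o' • f') ϑ :=
      (((hasFDerivAt_const (1:ℝ) ϑ).sub hf).mul_const c).add (hf.mul_const (πO o'))
    have h0 : (1 - β ϑ) * c + β ϑ * πO o' ≠ 0 := by
      rw [← hkval o']; exact ne_of_gt (hkpos o')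
    rw [heq, pd_log_aux hg h0 m, ← hkval o']
    simp only [ContinuousLinearMap.add_apply, ContinuousLinearMap.smul_apply,
      ContinuousLinearMap.sub_apply, ContinuousLinearMap.zero_apply, smul_eq_mul]
    ring
  have hpdβ : ∀ m : Fin n, pd m (fun ϑ' => Real.log (β ϑ')) ϑ
      = (β ϑ)⁻¹ * f' (Pi.single m 1) := fun m => pd_log_aux hf hβne m
  have hpdK : ∀ m : Fin n, pd m (fun ϑ' => Real.log (1 - β ϑ' + β ϑ' * πO o)) ϑ
      = (1 - β ϑ + β ϑ * πO o)⁻¹ * ((πO o - 1) * f' (Pi.single m 1)) := by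
    intro m
    have hg : HasFDerivAt (fun ϑ' => 1 - β ϑ' + β ϑ' * πO o)
        (((0 : (Fin n → ℝ) →L[ℝ] ℝ) - f') + πO o • f') ϑ :=
      ((hasFDerivAt_const (1:ℝ) ϑ).sub hf).add (hf.mul_const (πO o))
    rw [pd_log_aux hg hKne m]
    simp only [ContinuousLinearMap.add_apply, ContinuousLinearMap.smul_apply,
      ContinuousLinearMap.sub_apply, ContinuousLinearMap.zero_apply, smul_eq_mul]
    ring
  set Di := f' (Pi.single i 1)
  set Dj := f' (Pi.single j 1)
  have hsum : ∑ o' ∈ Finset.univ.erase o, πO o' = 1 - πO o := by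
    have h := Finset.add_sum_erase Finset.univ πO (Finset.mem_univ o)
    rw [hπOsum] at h; linarith
  calc ∑ o', k ϑ o' * pd i (fun ϑ' => Real.log (k ϑ' o')) ϑ
        * pd j (fun ϑ' => Real.log (k ϑ' o')) ϑ
      = ∑ o', k ϑ o' * ((k ϑ o')⁻¹ * ((πO o' - if o' = o then 1 else 0) * Di))
          * ((k ϑ o')⁻¹ * ((πO o' - if o' = o then 1 else 0) * Dj)) := by
        refine Finset.sum_congr rfl fun o' _ => by rw [hpd i o', hpd j o']
    _ = ∑ o', (πO o' - if o' = o then 1 else 0)^2 * Di * Dj / k ϑ o' := by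
        refine Finset.sum_congr rfl fun o' _ => ?_
        have h := ne_of_gt (hkpos o')
        field_simp
    _ = (πO o - 1)^2 * Di * Dj / (1 - β ϑ + β ϑ * πO o)
        + ∑ o' ∈ Finset.univ.erase o, πO o' * Di * Dj / β ϑ := by
        rw [← Finset.add_sum_erase Finset.univ _ (Finset.mem_univ o)]
        congr 1
        · rw [hkval o]; simp
        · refine Finset.sum_congr rfl fun o' ho' => ?_
          have hne : o' ≠ o := (Finset.mem_erase.mp ho').1
          rw [hkval o']
          simp only [hne, if_false]
          have h := ne_of_gt (hπO o')
          field_simp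
          ring
    _ = (πO o - 1)^2 * Di * Dj / (1 - β ϑ + β ϑ * πO o) + (1 - πO o) * Di * Dj / β ϑ := by
        rw [← Finset.sum_div, ← Finset.sum_mul, ← Finset.sum_mul, hsum]
    _ = -(pd i (fun ϑ' => Real.log (β ϑ')) ϑ
          * pd j (fun ϑ' => Real.log (1 - β ϑ' + β ϑ' * πO o)) ϑ) := by
        rw [hpdβ i, hpdK j]
        simp only [Di, Dj]
        have e1 : β ϑ * (β ϑ)⁻¹ = 1 := mul_inv_cancel₀ hβne
        have e2 : (1 - β ϑ + β ϑ * πO o) * (1 - β ϑ + β ϑ * πO o)⁻¹ = 1 := mul_inv_cancel₀ hKne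
        linear_combination (-(f' (Pi.single i 1) * f' (Pi.single j 1)) * (1 - πO o)^2
            * (1 - β ϑ + β ϑ * πO o)⁻¹) * e1
          + (-(f' (Pi.single i 1) * f' (Pi.single j 1)) * (1 - πO o) * (β ϑ)⁻¹) * e2
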